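/- Determinant-to-log-gas identity. Let r, s be positive integers, q a nonnegative integer, and α a real number. Then det[ Σ_{m=0}^{r−1} C(m+q,q) · (m)_{j−1} · C(r+k−2−m, k−1) · α^m ]_{j,k=1,…,s} = ((−1)^{s(s−1)/2} / ∏_{j=1}^{s} j!) · Σ_{m_1,…,m_s=0}^{r−1} ∏_{j=1}^{s} C(m_j+q,q) · ∏_{1≤j<k≤s}(m_k−m_j)^2 · α^{m_1+⋯+m_s}, where (m)_a = m(m−1)⋯(m−a+1) is the falling factorial (with (m)_0 = 1). -/

import Mathlib

open Finset Polynomial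

lemma choose_cast_eq (r k m : ℕ) (h : m < r) :
    (((r + k - 1 - m).choose k) : ℝ) =
      ((-1 : ℝ) ^ k / (k.factorial : ℝ)) * ∏ i ∈ range k, ((m : ℝ) - ((r : ℝ) + i)) := by
  have hk0 : (k.factorial : ℝ) ≠ 0 := Nat.cast_ne_zero.mpr k.factorial_ne_zero
  have h2 : (r + k - 1 - m).descFactorial k = ∏ i ∈ range k, (r + i - m) := by
    rw [Nat.descFactorial_eq_prod_range, ← Finset.prod_range_reflect]
    exact Finset.prod_congr rfl fun i hi => by
      have := Finset.mem_range.mp hi; omega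
  have h3 : ∏ i ∈ range k, ((m : ℝ) - ((r : ℝ) + i))
      = (-1 : ℝ) ^ k * (((r + k - 1 - m).descFactorial k : ℕ) : ℝ) := by
    rw [h2, Nat.cast_prod]
    calc ∏ i ∈ range k, ((m : ℝ) - ((r : ℝ) + i))
        = ∏ i ∈ range k, ((-1 : ℝ) * (((r + i - m : ℕ)) : ℝ)) := by
          refine Finset.prod_congr rfl fun i hi => ?_
          have hmi : m ≤ r + i := by omega
          rw [Nat.cast_sub hmi]; push_cast; ring
      _ = (-1 : ℝ) ^ k * ∏ i ∈ range k, (((r + i - m : ℕ)) : ℝ) := by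
          rw [Finset.prod_mul_distrib, Finset.prod_const, Finset.card_range]
  rw [h3, Nat.descFactorial_eq_factorial_mul_choose]
  push_cast
  rw [show ((-1:ℝ)^k / (k.factorial:ℝ)) * ((-1:ℝ)^k * ((k.factorial:ℝ) * (((r+k-1-m).choose k : ℕ) : ℝ)))
      = ((-1:ℝ)*(-1))^k * (((k.factorial:ℝ))/(k.factorial:ℝ)) * (((r+k-1-m).choose k : ℕ) : ℝ) by
    rw [mul_pow]; ring]
  rw [div_self hk0]
  norm_num

lemma det_descFactorial (s : ℕ) (t : Fin s → ℕ) :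
    Matrix.det (Matrix.of fun k j : Fin s => ((t k).descFactorial (j : ℕ) : ℝ)) =
      ∏ i : Fin s, ∏ j ∈ Ioi i, ((t j : ℝ) - (t i : ℝ)) := by
  have h : (Matrix.of fun k j : Fin s => ((t k).descFactorial (j : ℕ) : ℝ))
      = Matrix.of fun k j : Fin s => (descPochhammer ℝ (j : ℕ)).eval ((t k : ℝ)) := by
    ext k j
    simp [descPochhammer_eval_eq_descFactorial]
  rw [h, ← Matrix.det_eval_matrixOfPolynomials_eq_det_vandermonde _ _
      (fun j => descPochhammer_natDegree ℝ (j : ℕ)) (fun j => monic_descPochhammer ℝ (j : ℕ)),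
    Matrix.det_vandermonde]

lemma det_choose (s r : ℕ) (t : Fin s → ℕ) (ht : ∀ i, t i < r) :
    Matrix.det (Matrix.of fun i k : Fin s => (((r + (k : ℕ) - 1 - t i).choose (k : ℕ)) : ℝ)) =
      ((-1 : ℝ) ^ (s * (s - 1) / 2) / ∏ k ∈ range s, (k.factorial : ℝ)) *
        ∏ i : Fin s, ∏ j ∈ Ioi i, ((t j : ℝ) - (t i : ℝ)) := by
  set Q : Fin s → ℝ[X] := fun k => ∏ i ∈ range (k : ℕ), (X - C ((r : ℝ) + i)) with hQ
  have hmonic : ∀ k : Fin s, (Q k).Monic :=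
    fun k => monic_prod_of_monic _ _ fun i _ => monic_X_sub_C _
  have hdeg : ∀ k : Fin s, (Q k).natDegree = (k : ℕ) := by
    intro k
    rw [hQ, natDegree_prod_of_monic _ _ fun i _ => monic_X_sub_C _]
    have h1 : ∀ i ∈ range (k:ℕ), (X - C ((r:ℝ) + (i:ℕ))).natDegree = 1 :=
      fun i _ => natDegree_X_sub_C _
    rw [Finset.sum_congr rfl h1, Finset.sum_const, Finset.card_range, smul_eq_mul, mul_one]
  have heval : ∀ (x : ℝ) (k : Fin s), (Q k).eval x = ∏ i ∈ range (k : ℕ), (x - ((r : ℝ) + i)) := by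
    intro x k; rw [hQ]; simp [eval_prod]
  have hentry : (Matrix.of fun i k : Fin s => (((r + (k : ℕ) - 1 - t i).choose (k : ℕ)) : ℝ))
      = Matrix.of fun i k : Fin s =>
          ((-1 : ℝ) ^ (k : ℕ) / ((k : ℕ).factorial : ℝ)) * (Q k).eval (t i : ℝ) := by
    ext i k
    simp only [Matrix.of_apply]
    rw [choose_cast_eq r (k : ℕ) (t i) (ht i), heval]
  rw [hentry]
  refine (Matrix.det_mul_row (fun k : Fin s => (-1 : ℝ) ^ (k : ℕ) / ((k : ℕ).factorial : ℝ))
    (fun i k => eval ((t i : ℝ)) (Q k))).trans ?_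
  beta_reduce
  congr 1
  · rw [Finset.prod_div_distrib]
    congr 1
    · rw [Finset.prod_pow_eq_pow_sum,
        show ∑ i : Fin s, (i:ℕ) = s*(s-1)/2 from by
          rw [Fin.sum_univ_eq_sum_range (fun i => i) s, Finset.sum_range_id]]
    · rw [Fin.prod_univ_eq_prod_range (fun k => ((k.factorial : ℕ) : ℝ))]
  · rw [show (Matrix.det fun i k => eval ((t i : ℝ)) (Q k))
        = (Matrix.of fun i k => eval ((t i : ℝ)) (Q k)).det from rfl]
    rw [← Matrix.det_eval_matrixOfPolynomials_eq_det_vandermonde _ _ hdeg hmonic,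
      Matrix.det_vandermonde]

lemma vand_perm (s : ℕ) (x : Fin s → ℝ) (σ : Equiv.Perm (Fin s)) :
    ∏ i : Fin s, ∏ j ∈ Ioi i, (x (σ j) - x (σ i)) =
      ((Equiv.Perm.sign σ : ℤ) : ℝ) * ∏ i : Fin s, ∏ j ∈ Ioi i, (x j - x i) := by
  have h1 : Matrix.vandermonde (fun i => x (σ i)) = (Matrix.vandermonde x).submatrix σ id := by
    ext i j; simp [Matrix.vandermonde]
  have h2 := Matrix.det_permute σ (Matrix.vandermonde x)
  rw [← Matrix.det_vandermonde, h1, h2, Matrix.det_vandermonde]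


/-- Determinant-to-log-gas identity:
`det[ Σ_{m=0}^{r−1} C(m+q,q)·(m)_{j−1}·C(r+k−2−m,k−1)·α^m ]_{j,k=1,…,s}
  = ((−1)^{s(s−1)/2}/∏_{j=1}^s j!) Σ_{m_1,…,m_s=0}^{r−1} ∏_j C(m_j+q,q)
      ∏_{j<k}(m_k−m_j)^2 α^{m_1+⋯+m_s}`,
where `(m)_a = m(m−1)⋯(m−a+1)` is the falling factorial (here
`Nat.descFactorial m a`).  Indices `j, k : Fin s` are zero-based, so `(m)_{j−1}`
becomes `m.descFactorial (j : ℕ)` and `C(r+k−2−m, k−1)` becomes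
`C(r+(k:ℕ)−1−m, (k:ℕ))`. -/
theorem det_to_loggas (r s : ℕ) (hr : 0 < r) (hs : 0 < s) (q : ℕ) (α : ℝ) :
    Matrix.det (Matrix.of fun j k : Fin s =>
      ∑ m ∈ Finset.range r,
        ((m + q).choose q : ℝ) * (m.descFactorial (j : ℕ) : ℝ) *
          ((r + (k : ℕ) - 1 - m).choose (k : ℕ) : ℝ) * α ^ m) =
    ((-1 : ℝ) ^ (s * (s - 1) / 2) / ∏ j ∈ Finset.range s, ((j + 1).factorial : ℝ)) *
      ∑ m : Fin s → Fin r,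
        (∏ j : Fin s, (((m j : ℕ) + q).choose q : ℝ)) *
        (∏ j : Fin s, ∏ k ∈ Finset.Ioi j, (((m k : ℕ) : ℝ) - ((m j : ℕ) : ℝ)) ^ 2) *
        α ^ (∑ j : Fin s, (m j : ℕ)) := by
  classical
  -- abbreviations (plain defs, used via defeq)
  let c : ℕ → ℝ := fun m => ((m + q).choose q : ℝ)
  let p : Fin s → ℕ → ℝ := fun k m => ((r + (k : ℕ) - 1 - m).choose (k : ℕ) : ℝ)
  let V : (Fin s → Fin r) → ℝ :=
    fun t => ∏ i : Fin s, ∏ j ∈ Ioi i, (((t j : ℕ) : ℝ) - ((t i : ℕ) : ℝ))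
  let F : (Fin s → Fin r) → ℝ :=
    fun t => (∏ k : Fin s, (c ((t k : ℕ)) * p k ((t k : ℕ)) * α ^ (t k : ℕ))) * V t
  -- Step 1 : expand the determinant by multilinearity
  have step1 : Matrix.det (Matrix.of fun j k : Fin s =>
      ∑ m ∈ Finset.range r,
        ((m + q).choose q : ℝ) * (m.descFactorial (j : ℕ) : ℝ) *
          ((r + (k : ℕ) - 1 - m).choose (k : ℕ) : ℝ) * α ^ m)
      = ∑ t : Fin s → Fin r, F t := by
    rw [← Matrix.det_transpose]
    have hT : Matrix.transpose (Matrix.of fun j k : Fin s =>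
        ∑ m ∈ Finset.range r,
          ((m + q).choose q : ℝ) * (m.descFactorial (j : ℕ) : ℝ) *
            ((r + (k : ℕ) - 1 - m).choose (k : ℕ) : ℝ) * α ^ m)
        = fun k : Fin s => ∑ m : Fin r, (fun j : Fin s =>
            c (m : ℕ) * ((m : ℕ).descFactorial (j : ℕ) : ℝ) * p k (m : ℕ) * α ^ (m : ℕ)) := by
      funext k
      funext j
      simp only [Matrix.transpose_apply, Matrix.of_apply, Finset.sum_apply]
      rw [← Fin.sum_univ_eq_sum_range (fun m =>
        c m * (m.descFactorial (j : ℕ) : ℝ) * p k m * α ^ m) r]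
    rw [hT]
    have hms := (Matrix.detRowAlternating :
        (Fin s → ℝ) [⋀^Fin s]→ₗ[ℝ] ℝ).toMultilinearMap.map_sum
      (g := fun (k : Fin s) (m : Fin r) => (fun j : Fin s =>
        c (m : ℕ) * ((m : ℕ).descFactorial (j : ℕ) : ℝ) * p k (m : ℕ) * α ^ (m : ℕ)))
    refine hms.trans ?_
    refine Finset.sum_congr rfl fun t _ => ?_
    have hrow : (fun k : Fin s => (fun j : Fin s =>
        c ((t k : ℕ)) * (((t k : ℕ)).descFactorial (j : ℕ) : ℝ) * p k ((t k : ℕ)) * α ^ (t k : ℕ)))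
        = fun k : Fin s => (c ((t k : ℕ)) * p k ((t k : ℕ)) * α ^ (t k : ℕ)) •
            (fun j : Fin s => ((((t k : ℕ)).descFactorial (j : ℕ) : ℕ) : ℝ)) := by
      funext k
      funext j
      simp only [Pi.smul_apply, smul_eq_mul]
      ring
    rw [hrow]
    have hsm := (Matrix.detRowAlternating :
        (Fin s → ℝ) [⋀^Fin s]→ₗ[ℝ] ℝ).toMultilinearMap.map_smul_univ
      (fun k : Fin s => c ((t k : ℕ)) * p k ((t k : ℕ)) * α ^ (t k : ℕ))
      (fun k : Fin s => (fun j : Fin s => ((((t k : ℕ)).descFactorial (j : ℕ) : ℕ) : ℝ)))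
    refine hsm.trans ?_
    rw [smul_eq_mul]
    congr 1
    exact det_descFactorial s (fun k => (t k : ℕ))
  -- determinant of the choose matrix
  have hdetP : ∀ t : Fin s → Fin r,
      Matrix.det (Matrix.of fun i k : Fin s => p k ((t i : ℕ)))
        = ((-1 : ℝ) ^ (s * (s - 1) / 2) / ∏ k ∈ Finset.range s, (k.factorial : ℝ)) * V t :=
    fun t => det_choose s r (fun i => (t i : ℕ)) (fun i => (t i).isLt)
  -- Step 2 : symmetrization
  have step2 : (s.factorial : ℝ) * ∑ t : Fin s → Fin r, F t
      = ((-1 : ℝ) ^ (s * (s - 1) / 2) / ∏ k ∈ Finset.range s, (k.factorial : ℝ)) *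
          ∑ t : Fin s → Fin r,
            (∏ k : Fin s, (c ((t k : ℕ)) * α ^ (t k : ℕ))) * (V t) ^ 2 := by
    have hre : ∀ σ : Equiv.Perm (Fin s),
        ∑ t : Fin s → Fin r, F (t ∘ σ) = ∑ t : Fin s → Fin r, F t := by
      intro σ
      refine Fintype.sum_bijective (fun t => t ∘ σ) ?_ _ _ (fun t => rfl)
      constructor
      · intro a b hab
        funext i
        have := congrFun hab (σ.symm i)
        simpa using this
      · intro b
        exact ⟨b ∘ σ.symm, by funext i; simp⟩
    have hper : ∀ (t : Fin s → Fin r) (σ : Equiv.Perm (Fin s)),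
        F (t ∘ σ) = ((∏ k : Fin s, (c ((t k : ℕ)) * α ^ (t k : ℕ))) * V t) *
          (((Equiv.Perm.sign σ : ℤ) : ℝ) * ∏ k : Fin s, p k ((t (σ k) : ℕ))) := by
      intro t σ
      have hVp : V (t ∘ σ) = ((Equiv.Perm.sign σ : ℤ) : ℝ) * V t :=
        vand_perm s (fun i => ((t i : ℕ) : ℝ)) σ
      have hsplit : ∏ k : Fin s, (c ((t (σ k) : ℕ)) * p k ((t (σ k) : ℕ)) * α ^ (t (σ k) : ℕ))
          = (∏ k : Fin s, (c ((t k : ℕ)) * α ^ (t k : ℕ))) * ∏ k : Fin s, p k ((t (σ k) : ℕ)) := by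
        calc ∏ k : Fin s, (c ((t (σ k) : ℕ)) * p k ((t (σ k) : ℕ)) * α ^ (t (σ k) : ℕ))
            = ∏ k : Fin s, ((c ((t (σ k) : ℕ)) * α ^ (t (σ k) : ℕ)) * p k ((t (σ k) : ℕ))) :=
              Finset.prod_congr rfl fun k _ => by ring
          _ = (∏ k : Fin s, (c ((t (σ k) : ℕ)) * α ^ (t (σ k) : ℕ))) *
                ∏ k : Fin s, p k ((t (σ k) : ℕ)) := Finset.prod_mul_distrib
          _ = (∏ k : Fin s, (c ((t k : ℕ)) * α ^ (t k : ℕ))) *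
                ∏ k : Fin s, p k ((t (σ k) : ℕ)) := by
              rw [Equiv.prod_comp σ (fun k => c ((t k : ℕ)) * α ^ (t k : ℕ))]
      show (∏ k : Fin s, (c ((t (σ k) : ℕ)) * p k ((t (σ k) : ℕ)) * α ^ (t (σ k) : ℕ))) * V (t ∘ σ) = _
      rw [hsplit, hVp]
      ring
    have hdetsum : ∀ t : Fin s → Fin r,
        ∑ σ : Equiv.Perm (Fin s), ((Equiv.Perm.sign σ : ℤ) : ℝ) * ∏ k : Fin s, p k ((t (σ k) : ℕ))
          = Matrix.det (Matrix.of fun i k : Fin s => p k ((t i : ℕ))) := by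
      intro t
      rw [Matrix.det_apply]
      refine Finset.sum_congr rfl fun σ _ => ?_
      simp only [Matrix.of_apply, Units.smul_def, zsmul_eq_mul]
    calc (s.factorial : ℝ) * ∑ t : Fin s → Fin r, F t
        = ∑ σ : Equiv.Perm (Fin s), ∑ t : Fin s → Fin r, F t := by
          rw [Finset.sum_const, Finset.card_univ, Fintype.card_perm, Fintype.card_fin,
            nsmul_eq_mul]
      _ = ∑ σ : Equiv.Perm (Fin s), ∑ t : Fin s → Fin r, F (t ∘ σ) :=
          Finset.sum_congr rfl fun σ _ => (hre σ).symm
      _ = ∑ t : Fin s → Fin r, ∑ σ : Equiv.Perm (Fin s), F (t ∘ σ) := Finset.sum_comm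
      _ = ∑ t : Fin s → Fin r,
            ((-1 : ℝ) ^ (s * (s - 1) / 2) / ∏ k ∈ Finset.range s, (k.factorial : ℝ)) *
              ((∏ k : Fin s, (c ((t k : ℕ)) * α ^ (t k : ℕ))) * (V t) ^ 2) := by
          refine Finset.sum_congr rfl fun t _ => ?_
          rw [Finset.sum_congr rfl fun σ _ => hper t σ, ← Finset.mul_sum, hdetsum t, hdetP t]
          ring
      _ = ((-1 : ℝ) ^ (s * (s - 1) / 2) / ∏ k ∈ Finset.range s, (k.factorial : ℝ)) *
            ∑ t : Fin s → Fin r,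
              (∏ k : Fin s, (c ((t k : ℕ)) * α ^ (t k : ℕ))) * (V t) ^ 2 :=
          (Finset.mul_sum _ _ _).symm
  -- Step 3 : assemble
  have hs0 : (s.factorial : ℝ) ≠ 0 := Nat.cast_ne_zero.mpr s.factorial_ne_zero
  have hpk0 : (∏ k ∈ Finset.range s, (k.factorial : ℝ)) ≠ 0 :=
    Finset.prod_ne_zero_iff.mpr fun k _ => Nat.cast_ne_zero.mpr k.factorial_ne_zero
  have hfac : ∏ j ∈ Finset.range s, ((j + 1).factorial : ℝ)
      = (s.factorial : ℝ) * ∏ j ∈ Finset.range s, (j.factorial : ℝ) := by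
    rw [← Nat.cast_prod, ← Nat.cast_prod, ← Nat.cast_mul]
    congr 1
    calc ∏ j ∈ Finset.range s, (j + 1).factorial
        = ∏ j ∈ Finset.range s, ((j + 1) * j.factorial) :=
          Finset.prod_congr rfl fun j _ => Nat.factorial_succ j
      _ = (∏ j ∈ Finset.range s, (j + 1)) * ∏ j ∈ Finset.range s, j.factorial :=
          Finset.prod_mul_distrib
      _ = s.factorial * ∏ j ∈ Finset.range s, j.factorial := by
          rw [Finset.prod_range_add_one_eq_factorial]
  have hsummand : ∀ t : Fin s → Fin r,
      (∏ k : Fin s, (c ((t k : ℕ)) * α ^ (t k : ℕ))) * (V t) ^ 2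
        = (∏ j : Fin s, (((t j : ℕ) + q).choose q : ℝ)) *
          (∏ j : Fin s, ∏ k ∈ Finset.Ioi j, (((t k : ℕ) : ℝ) - ((t j : ℕ) : ℝ)) ^ 2) *
          α ^ (∑ j : Fin s, (t j : ℕ)) := by
    intro t
    have h1 : ∏ k : Fin s, (c ((t k : ℕ)) * α ^ (t k : ℕ))
        = (∏ k : Fin s, c ((t k : ℕ))) * α ^ (∑ j : Fin s, (t j : ℕ)) := by
      rw [Finset.prod_mul_distrib, Finset.prod_pow_eq_pow_sum]
    have h2 : (V t) ^ 2
        = ∏ j : Fin s, ∏ k ∈ Finset.Ioi j, (((t k : ℕ) : ℝ) - ((t j : ℕ) : ℝ)) ^ 2 := by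
      show (∏ i : Fin s, ∏ j ∈ Ioi i, (((t j : ℕ) : ℝ) - ((t i : ℕ) : ℝ))) ^ 2 = _
      rw [← Finset.prod_pow]
      exact Finset.prod_congr rfl fun i _ => (Finset.prod_pow _ _ _).symm
    rw [h1, h2]
    ring
  rw [step1]
  have := step2
  rw [Finset.sum_congr rfl fun t _ => hsummand t] at this
  have hfinal : ∑ t : Fin s → Fin r, F t
      = ((-1 : ℝ) ^ (s * (s - 1) / 2) / ∏ j ∈ Finset.range s, ((j + 1).factorial : ℝ)) *
          ∑ t : Fin s → Fin r,
            (∏ j : Fin s, (((t j : ℕ) + q).choose q : ℝ)) *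
            (∏ j : Fin s, ∏ k ∈ Finset.Ioi j, (((t k : ℕ) : ℝ) - ((t j : ℕ) : ℝ)) ^ 2) *
            α ^ (∑ j : Fin s, (t j : ℕ)) := by
    rw [hfac]
    field_simp at this ⊢
    linarith [this]
  exact hfinal
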